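/- Let T be a continuous linear operator on a separable Fréchet space X. If T is hypercyclic and has dense small periodic sets, then T is AP_b-hypercyclic. -/

import Mathlib

/-- A set `A ⊆ ℕ` belongs to the family `AP_b` if it contains arbitrarily long
arithmetic progressions with some fixed common difference `k ≥ 1`. -/
def APb (A : Set ℕ) : Prop :=
  ∃ k : ℕ, 1 ≤ k ∧ ∀ m : ℕ, ∃ a : ℕ, ∀ j : ℕ, j ≤ m → a + j * k ∈ A

/-- A hypercyclic continuous linear operator on a separable
Fréchet space that has dense small periodic sets is `AP_b`-hypercyclic. -/
theorem hypercyclic_denseSmallPeriodicSets_implies_APb_hypercyclic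
    {X : Type*} [AddCommGroup X] [Module ℝ X] [UniformSpace X] [IsUniformAddGroup X]
    [ContinuousSMul ℝ X] [LocallyConvexSpace ℝ X] [CompleteSpace X]
    [Filter.IsCountablyGenerated (uniformity X)] [T2Space X]
    [TopologicalSpace.SeparableSpace X]
    (T : X →L[ℝ] X)
    (hHC : ∃ x : X, Dense (Set.range fun n : ℕ => (T ^ n) x))
    (hDSP : ∀ U : Set X, IsOpen U → U.Nonempty →
      ∃ Y : Set X, Y.Nonempty ∧ IsClosed Y ∧ Y ⊆ U ∧
        ∃ k : ℕ, 1 ≤ k ∧ (fun y : X => (T ^ k) y) '' Y ⊆ Y) :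
    ∃ x : X, ∀ U : Set X, IsOpen U → U.Nonempty → APb {n : ℕ | (T ^ n) x ∈ U} := by
  obtain ⟨x, hx⟩ := hHC
  refine ⟨x, fun U hUo hUne => ?_⟩
  obtain ⟨Y, hYne, _, hYU, k, hk1, hTk⟩ := hDSP U hUo hUne
  -- T^{jk} maps Y into Y
  have hiter : ∀ j : ℕ, ∀ y ∈ Y, (T ^ (j * k)) y ∈ Y := by
    intro j
    induction j with
    | zero => intro y hy; simpa using hy
    | succ n ih =>
      intro y hy
      have : (T ^ ((n + 1) * k)) y = (T ^ k) ((T ^ (n * k)) y) := by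
        rw [add_mul, one_mul, add_comm, pow_add]
        rfl
      rw [this]
      exact hTk ⟨_, ih y hy, rfl⟩
  refine ⟨k, hk1, fun m => ?_⟩
  -- the open set V = ⋂ j ≤ m, (T^{jk})⁻¹ U
  set V : Set X := ⋂ j ∈ Finset.range (m + 1), (fun y => (T ^ (j * k)) y) ⁻¹' U with hV
  have hVo : IsOpen V := by
    apply isOpen_biInter_finset
    intro j _
    exact hUo.preimage (T ^ (j * k)).continuous
  have hYV : Y ⊆ V := by
    intro y hy
    simp only [hV, Set.mem_iInter, Set.mem_preimage]
    intro j _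
    exact hYU (hiter j y hy)
  have hVne : V.Nonempty := hYne.mono hYV
  obtain ⟨_, ⟨a, rfl⟩, haV⟩ := hx.exists_mem_open hVo hVne
  refine ⟨a, fun j hj => ?_⟩
  have hjV : (T ^ a) x ∈ (fun y => (T ^ (j * k)) y) ⁻¹' U := by
    simp only [hV, Set.mem_iInter] at haV
    exact haV j (Finset.mem_range.mpr (Nat.lt_succ_of_le hj))
  have : (T ^ (a + j * k)) x = (T ^ (j * k)) ((T ^ a) x) := by
    rw [add_comm a (j * k), pow_add]; rfl
  show (T ^ (a + j * k)) x ∈ U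
  rw [this]; exact hjV
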